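/- arXiv:2404.01190 — 2 statements merged into one kernel-verified Lean document; each statement's English description precedes it below -/
import Mathlib

section
/- With the setup of the efficient value of information: if additionally φ is strictly convex and the constraint binds at every η, then W is strictly concave on [0, η̄]: for η₁ ≠ η₂ and υ ∈ (0,1), W(υη₁ + (1−υ)η₂) > υW(η₁) + (1−υ)W(η₂). -/
open MeasureTheory Set

def BayesPlausible {Θ : Type*} [Fintype Θ] (μ : Θ → ℝ) (F : Measure (Θ → ℝ)) : Prop :=
  IsProbabilityMeasure F ∧ (∀ᵐ x ∂F, x ∈ stdSimplex ℝ Θ) ∧ (∫ x, x ∂F) = μ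

lemma mix_integral {Θ : Type*} [Fintype Θ] {E : Type*} [NormedAddCommGroup E]
    [NormedSpace ℝ E] (F₁ F₂ : Measure (Θ → ℝ)) (f : (Θ → ℝ) → E) {a b : ℝ}
    (ha : 0 ≤ a) (hb : 0 ≤ b) (h1 : Integrable f F₁) (h2 : Integrable f F₂) :
    ∫ x, f x ∂(ENNReal.ofReal a • F₁ + ENNReal.ofReal b • F₂)
      = a • ∫ x, f x ∂F₁ + b • ∫ x, f x ∂F₂ := by
  rw [integral_add_measure (h1.smul_measure ENNReal.ofReal_ne_top)
      (h2.smul_measure ENNReal.ofReal_ne_top), integral_smul_measure,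
      integral_smul_measure, ENNReal.toReal_ofReal ha, ENNReal.toReal_ofReal hb]

lemma integrable_id_of_simplex {Θ : Type*} [Fintype Θ] {F : Measure (Θ → ℝ)}
    (hP : IsProbabilityMeasure F) (hs : ∀ᵐ x ∂F, x ∈ stdSimplex ℝ Θ) :
    Integrable (fun x : Θ → ℝ => x) F := by
  obtain ⟨C, hC⟩ := (isBounded_iff_forall_norm_le).1 (isCompact_stdSimplex ℝ Θ).isBounded
  exact (integrable_const C).mono' aestronglyMeasurable_id
    (hs.mono fun x hx => hC x hx)

/-- Strict concavity of the efficient value of information: with `φ` strictly convex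
and the constraint binding at every `η`, `W` is strictly concave on `[0,ηb]`:
for `η₁ ≠ η₂` and `υ ∈ (0,1)`, `W(υη₁+(1−υ)η₂) > υW(η₁)+(1−υ)W(η₂)`. -/
theorem stmt4 {Θ : Type*} [Fintype Θ] (μ : Θ → ℝ) (hμ : μ ∈ stdSimplex ℝ Θ)
    (V : (Θ → ℝ) → ℝ) (hVc : Continuous V)
    (c : (Θ → ℝ) → (Θ → ℝ) → ℝ) (φ : ℝ → ℝ) (D : Measure (Θ → ℝ) → ℝ)
    (hD : ∀ F, D F = φ (∫ x, c x μ ∂F))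
    (hφconv : StrictConvexOn ℝ univ φ) (hφmono : StrictMono φ) (hφ0 : φ 0 = 0)
    (hc : StrictConvexOn ℝ (stdSimplex ℝ Θ) (fun x => c x μ)) (hc0 : c μ μ = 0)
    (ηb : ℝ) (hηb : 0 < ηb) (W : ℝ → ℝ)
    (hint : ∀ F, BayesPlausible μ F → Integrable V F ∧ Integrable (fun x => c x μ) F)
    (hatt : ∀ η ∈ Icc (0:ℝ) ηb, ∃ F, BayesPlausible μ F ∧ D F ≤ η ∧
      (∫ x, V x ∂F) = W η ∧
      ∀ G, BayesPlausible μ G → D G ≤ η → (∫ x, V x ∂G) ≤ W η)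
    (hbind : ∀ η ∈ Icc (0:ℝ) ηb, ∀ F, BayesPlausible μ F → D F ≤ η →
      (∀ G, BayesPlausible μ G → D G ≤ η → (∫ x, V x ∂G) ≤ ∫ x, V x ∂F) → D F = η)
    (hWmono : MonotoneOn W (Icc 0 ηb)) :
    StrictConcaveOn ℝ (Icc 0 ηb) W := by
  refine ⟨convex_Icc 0 ηb, ?_⟩
  intro η₁ hη₁ η₂ hη₂ hne a b ha hb hab
  simp only [smul_eq_mul]
  -- optimizers at η₁ and η₂
  obtain ⟨F₁, hBP₁, hD₁, hV₁, hopt₁⟩ := hatt η₁ hη₁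
  obtain ⟨F₂, hBP₂, hD₂, hV₂, hopt₂⟩ := hatt η₂ hη₂
  have hDF₁ : D F₁ = η₁ := hbind η₁ hη₁ F₁ hBP₁ hD₁
    (fun G hG hDG => hV₁ ▸ hopt₁ G hG hDG)
  have hDF₂ : D F₂ = η₂ := hbind η₂ hη₂ F₂ hBP₂ hD₂
    (fun G hG hDG => hV₂ ▸ hopt₂ G hG hDG)
  -- the mixture measure
  set F : Measure (Θ → ℝ) := ENNReal.ofReal a • F₁ + ENNReal.ofReal b • F₂ with hF
  have hintV₁ := (hint F₁ hBP₁).1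
  have hintV₂ := (hint F₂ hBP₂).1
  have hintc₁ := (hint F₁ hBP₁).2
  have hintc₂ := (hint F₂ hBP₂).2
  have hid₁ := integrable_id_of_simplex hBP₁.1 hBP₁.2.1
  have hid₂ := integrable_id_of_simplex hBP₂.1 hBP₂.2.1
  have hBPF : BayesPlausible μ F := by
    refine ⟨⟨?_⟩, ?_, ?_⟩
    · have h1 := hBP₁.1.measure_univ
      have h2 := hBP₂.1.measure_univ
      simp [hF, Measure.add_apply, h1, h2, ← ENNReal.ofReal_add ha.le hb.le, hab]
    · rw [hF, ae_add_measure_iff]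
      exact ⟨Measure.ae_smul_measure hBP₁.2.1 _, Measure.ae_smul_measure hBP₂.2.1 _⟩
    · rw [hF, mix_integral F₁ F₂ _ ha.le hb.le hid₁ hid₂, hBP₁.2.2, hBP₂.2.2]
      exact Convex.combo_self hab μ
  -- the mixture is strictly feasible
  have hI : ∫ x, c x μ ∂F = a * ∫ x, c x μ ∂F₁ + b * ∫ x, c x μ ∂F₂ := by
    rw [hF, mix_integral F₁ F₂ _ ha.le hb.le hintc₁ hintc₂]; simp
  have hIne : (∫ x, c x μ ∂F₁) ≠ ∫ x, c x μ ∂F₂ := by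
    intro h
    apply hne
    rw [← hDF₁, ← hDF₂, hD, hD, h]
  have hDFlt : D F < a * η₁ + b * η₂ := by
    rw [hD, hI, ← hDF₁, ← hDF₂, hD, hD]
    simpa using hφconv.2 (mem_univ _) (mem_univ _) hIne ha hb hab
  have hηm : a * η₁ + b * η₂ ∈ Icc (0:ℝ) ηb :=
    (convex_Icc 0 ηb) hη₁ hη₂ ha.le hb.le hab
  obtain ⟨Fm, hBPm, hDm, hVm, hoptm⟩ := hatt _ hηm
  have hVF : ∫ x, V x ∂F = a * W η₁ + b * W η₂ := by
    rw [hF, mix_integral F₁ F₂ _ ha.le hb.le hintV₁ hintV₂, hV₁, hV₂]; simp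
  have hle : ∫ x, V x ∂F ≤ W (a * η₁ + b * η₂) := hoptm F hBPF hDFlt.le
  rcases lt_or_eq_of_le hle with h | h
  · simpa [hVF, smul_eq_mul] using h
  · exfalso
    have := hbind _ hηm F hBPF hDFlt.le
      (fun G hG hDG => h ▸ hoptm G hG hDG)
    exact hDFlt.ne this
end

section
/- Binding constraint lemma: Let V : Δ(Θ) → ℝ be continuous, let F̄ be the Bayes-plausible distribution supported on the vertices of the simplex (full information), and suppose η̄ < D(F̄) and E_F[V] < E_{F̄}[V] for every feasible F with D(F) ≤ η̄. If F solves max{E_G[V] : G Bayes-plausible, D(G) ≤ η} for η ≤ η̄ and D(F) < η, then there exists λ* ∈ (0,1) with D(λ*F + (1−λ*)F̄) = η and E_{λ*F+(1−λ*)F̄}[V] > E_F[V], contradicting optimality; hence every optimizer satisfies D(F) = η. -/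
open MeasureTheory Set

/-- The full-information distribution over posteriors: `F̄ = Σ_θ μ(θ) · δ_{e_θ}`,
supported on the vertices of the simplex. -/
noncomputable def fullInfo {Θ : Type*} [Fintype Θ] [DecidableEq Θ] (μ : Θ → ℝ) :
    Measure (Θ → ℝ) :=
  ∑ θ : Θ, ENNReal.ofReal (μ θ) • Measure.dirac (Pi.single θ (1:ℝ))

section aux
set_option linter.unusedSectionVars false
variable {Θ : Type*} [Fintype Θ] [DecidableEq Θ]

lemma my_integrable_dirac {E : Type*} [NormedAddCommGroup E]
    (f : (Θ → ℝ) → E) (a : Θ → ℝ) : Integrable f (Measure.dirac a) := by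
  have h : (fun _ : Θ → ℝ => f a) =ᵐ[Measure.dirac a] f := by
    rw [MeasureTheory.ae_dirac_eq]; exact Filter.eventually_pure.2 rfl
  exact (integrable_const (f a)).congr h

lemma my_integrable_of_cont {E : Type*} [NormedAddCommGroup E]
    (ν : Measure (Θ → ℝ)) [IsFiniteMeasure ν]
    (hν : ∀ᵐ x ∂ν, x ∈ stdSimplex ℝ Θ) (f : (Θ → ℝ) → E) (hf : Continuous f) :
    Integrable f ν := by
  obtain ⟨C, hC⟩ := (isCompact_stdSimplex ℝ Θ).exists_bound_of_continuousOn hf.continuousOn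
  exact (integrable_const C).mono' hf.aestronglyMeasurable (hν.mono fun x hx => hC x hx)

lemma my_integrable_fullInfo {E : Type*} [NormedAddCommGroup E]
    (μ : Θ → ℝ) (f : (Θ → ℝ) → E) : Integrable f (fullInfo μ) := by
  rw [fullInfo]
  exact integrable_finset_sum_measure.2 fun θ _ =>
    (my_integrable_dirac f _).smul_measure ENNReal.ofReal_ne_top

lemma my_integral_fullInfo {E : Type*} [NormedAddCommGroup E] [NormedSpace ℝ E] [CompleteSpace E]
    (μ : Θ → ℝ) (hμ0 : ∀ θ, 0 ≤ μ θ) (f : (Θ → ℝ) → E) :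
    ∫ x, f x ∂(fullInfo μ) = ∑ θ, μ θ • f (Pi.single θ 1) := by
  rw [fullInfo, integral_finset_sum_measure
    (fun θ _ => (my_integrable_dirac f _).smul_measure ENNReal.ofReal_ne_top)]
  refine Finset.sum_congr rfl fun θ _ => ?_
  rw [integral_smul_measure, integral_dirac, ENNReal.toReal_ofReal (hμ0 θ)]

lemma my_fullInfo_prob (μ : Θ → ℝ) (hμ : μ ∈ stdSimplex ℝ Θ) :
    IsProbabilityMeasure (fullInfo μ) := by
  constructor
  rw [fullInfo]
  simp only [Measure.coe_finset_sum, Finset.sum_apply, Measure.smul_apply,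
    measure_univ, smul_eq_mul, mul_one]
  rw [← ENNReal.ofReal_sum_of_nonneg (fun θ _ => hμ.1 θ), hμ.2, ENNReal.ofReal_one]

lemma my_fullInfo_ae (μ : Θ → ℝ) : ∀ᵐ x ∂(fullInfo μ), x ∈ stdSimplex ℝ Θ := by
  rw [ae_iff, fullInfo]
  simp only [Measure.coe_finset_sum, Finset.sum_apply, Measure.smul_apply, smul_eq_mul]
  refine Finset.sum_eq_zero fun θ _ => ?_
  rw [Measure.dirac_apply]
  have : Pi.single θ (1:ℝ) ∈ stdSimplex ℝ Θ := single_mem_stdSimplex ℝ θ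
  simp [this]

lemma my_fullInfo_bayes (μ : Θ → ℝ) (hμ : μ ∈ stdSimplex ℝ Θ) :
    BayesPlausible μ (fullInfo μ) := by
  refine ⟨my_fullInfo_prob μ hμ, my_fullInfo_ae μ, ?_⟩
  rw [my_integral_fullInfo μ hμ.1]
  funext θ'
  simp [Finset.sum_apply, Pi.single_apply]

lemma my_integral_mix {E : Type*} [NormedAddCommGroup E] [NormedSpace ℝ E]
    (ν₁ ν₂ : Measure (Θ → ℝ)) {l : ℝ} (hl0 : 0 ≤ l) (hl1 : l ≤ 1)
    (f : (Θ → ℝ) → E) (h1 : Integrable f ν₁) (h2 : Integrable f ν₂) :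
    ∫ x, f x ∂(ENNReal.ofReal l • ν₁ + ENNReal.ofReal (1 - l) • ν₂)
      = l • ∫ x, f x ∂ν₁ + (1 - l) • ∫ x, f x ∂ν₂ := by
  rw [integral_add_measure (h1.smul_measure ENNReal.ofReal_ne_top)
    (h2.smul_measure ENNReal.ofReal_ne_top), integral_smul_measure, integral_smul_measure,
    ENNReal.toReal_ofReal hl0, ENNReal.toReal_ofReal (by linarith)]

lemma my_mix_bayes (μ : Θ → ℝ) (ν₁ ν₂ : Measure (Θ → ℝ)) {l : ℝ} (hl0 : 0 ≤ l) (hl1 : l ≤ 1)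
    (h1 : BayesPlausible μ ν₁) (h2 : BayesPlausible μ ν₂) :
    BayesPlausible μ (ENNReal.ofReal l • ν₁ + ENNReal.ofReal (1 - l) • ν₂) := by
  haveI := h1.1; haveI := h2.1
  refine ⟨⟨?_⟩, ?_, ?_⟩
  · simp only [Measure.coe_add, Pi.add_apply, Measure.smul_apply, measure_univ, smul_eq_mul,
      mul_one]
    rw [← ENNReal.ofReal_add hl0 (by linarith)]
    norm_num
  · rw [ae_add_measure_iff]
    exact ⟨Measure.ae_smul_measure h1.2.1 _, Measure.ae_smul_measure h2.2.1 _⟩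
  · have i1 : Integrable (fun x : Θ → ℝ => x) ν₁ :=
      my_integrable_of_cont ν₁ h1.2.1 _ continuous_id
    have i2 : Integrable (fun x : Θ → ℝ => x) ν₂ :=
      my_integrable_of_cont ν₂ h2.2.1 _ continuous_id
    rw [my_integral_mix ν₁ ν₂ hl0 hl1 _ i1 i2, h1.2.2, h2.2.2]
    funext θ; simp; ring

end aux

/-- Binding-constraint lemma: if `F` solves `max {E_G[V] : D(G) ≤ η}` with `D(F) < η`,
then mixing `F` with the full-information distribution `F̄` produces, for some
`λ* ∈ (0,1)`, a feasible distribution with `D = η` and a strictly higher value,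
contradicting optimality; hence every optimizer satisfies `D(F) = η`. -/
theorem stmt6 {Θ : Type*} [Fintype Θ] [DecidableEq Θ]
    (μ : Θ → ℝ) (hμ : μ ∈ stdSimplex ℝ Θ) (hμpos : ∀ θ, 0 < μ θ)
    (V : (Θ → ℝ) → ℝ) (hVc : Continuous V)
    (c : (Θ → ℝ) → (Θ → ℝ) → ℝ) (φ : ℝ → ℝ) (D : Measure (Θ → ℝ) → ℝ)
    (hD : ∀ F, D F = φ (∫ x, c x μ ∂F))
    (hφcont : Continuous φ) (hφconv : ConvexOn ℝ univ φ) (hφmono : StrictMono φ)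
    (hφ0 : φ 0 = 0)
    (hc : StrictConvexOn ℝ (stdSimplex ℝ Θ) (fun x => c x μ)) (hc0 : c μ μ = 0)
    (ηb η : ℝ) (hη : η ≤ ηb) (hηb : ηb < D (fullInfo μ))
    (hsub : ∀ G, BayesPlausible μ G → D G ≤ ηb →
      (∫ x, V x ∂G) < ∫ x, V x ∂(fullInfo μ))
    (F : Measure (Θ → ℝ)) (hF : BayesPlausible μ F) (hFfeas : D F ≤ η)
    (hFopt : ∀ G, BayesPlausible μ G → D G ≤ η → (∫ x, V x ∂G) ≤ ∫ x, V x ∂F) :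
    (D F < η → ∃ l ∈ Ioo (0:ℝ) 1,
      D (ENNReal.ofReal l • F + ENNReal.ofReal (1 - l) • fullInfo μ) = η ∧
      (∫ x, V x ∂F) <
        ∫ x, V x ∂(ENNReal.ofReal l • F + ENNReal.ofReal (1 - l) • fullInfo μ)) ∧
    D F = η := by
  haveI := hF.1
  haveI := my_fullInfo_prob μ hμ
  set FB := fullInfo μ with hFB
  have hBb : BayesPlausible μ FB := my_fullInfo_bayes μ hμ
  set vF := ∫ x, V x ∂F with hvF
  set vB := ∫ x, V x ∂FB with hvB
  have hVF : Integrable V F := my_integrable_of_cont F hF.2.1 V hVc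
  have hVB : Integrable V FB := my_integrable_fullInfo μ V
  have hvlt : vF < vB := hsub F hF (le_trans hFfeas hη)
  -- value of the mixture
  have hval : ∀ l : ℝ, 0 < l → l < 1 →
      vF < ∫ x, V x ∂(ENNReal.ofReal l • F + ENNReal.ofReal (1 - l) • FB) := by
    intro l hl0 hl1
    rw [my_integral_mix F FB hl0.le hl1.le V hVF hVB]
    simp only [smul_eq_mul]
    nlinarith
  by_cases hci : Integrable (fun x => c x μ) F
  · -- integrable case : intermediate value argument
    have hciB : Integrable (fun x => c x μ) FB := my_integrable_fullInfo μ _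
    set IF := ∫ x, c x μ ∂F with hIF
    set IB := ∫ x, c x μ ∂FB with hIB
    have hDmix : ∀ l : ℝ, 0 ≤ l → l ≤ 1 →
        D (ENNReal.ofReal l • F + ENNReal.ofReal (1 - l) • FB)
          = φ (l * IF + (1 - l) * IB) := by
      intro l hl0 hl1
      rw [hD, my_integral_mix F FB hl0 hl1 _ hci hciB]
      simp [smul_eq_mul]
      rfl
    have hkey : D F < η → ∃ l ∈ Ioo (0:ℝ) 1,
        D (ENNReal.ofReal l • F + ENNReal.ofReal (1 - l) • FB) = η ∧
        vF < ∫ x, V x ∂(ENNReal.ofReal l • F + ENNReal.ofReal (1 - l) • FB) := by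
      intro hlt
      have hcont : ContinuousOn (fun l : ℝ => φ (l * IF + (1 - l) * IB)) (Icc 0 1) :=
        (hφcont.comp (by continuity)).continuousOn
      have h1 : φ (1 * IF + (1 - 1) * IB) = D F := by rw [hD]; norm_num; rfl
      have h0 : φ (0 * IF + (1 - 0) * IB) = D FB := by
        rw [hD, ← hIB]; norm_num
      have hmem : η ∈ Ioo (φ (1 * IF + (1 - 1) * IB)) (φ (0 * IF + (1 - 0) * IB)) := by
        rw [h1, h0]; exact ⟨hlt, lt_of_le_of_lt hη hηb⟩
      obtain ⟨l, hlmem, hlval⟩ := intermediate_value_Ioo' (by norm_num : (0:ℝ) ≤ 1) hcont hmem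
      exact ⟨l, hlmem, by rw [hDmix l hlmem.1.le hlmem.2.le]; simpa using hlval,
        hval l hlmem.1 hlmem.2⟩
    refine ⟨hkey, ?_⟩
    by_contra hne
    have hlt : D F < η := lt_of_le_of_ne hFfeas hne
    obtain ⟨l, hlmem, hDl, hVl⟩ := hkey hlt
    have := hFopt _ (my_mix_bayes μ F FB hlmem.1.le hlmem.2.le hF hBb) hDl.le
    exact absurd this (not_le.2 hVl)
  · -- non-integrable case : derive a contradiction from optimality
    exfalso
    set G := ENNReal.ofReal (1/2 : ℝ) • F + ENNReal.ofReal (1 - 1/2 : ℝ) • FB with hG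
    have hGbayes : BayesPlausible μ G :=
      my_mix_bayes μ F FB (by norm_num) (by norm_num) hF hBb
    have hGci : ¬ Integrable (fun x => c x μ) G := by
      intro h
      rw [hG] at h
      have := (integrable_add_measure.1 h).1
      exact hci ((integrable_smul_measure
        (by simp) ENNReal.ofReal_ne_top).1 this)
    have hDG : D G = D F := by
      rw [hD, hD, integral_undef hGci, integral_undef hci]
    have := hFopt G hGbayes (hDG ▸ hFfeas)
    exact absurd this (not_le.2 (hval (1/2) (by norm_num) (by norm_num)))
end
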